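/- arXiv:2204.08761 — 2 statements merged into one kernel-verified Lean document; each statement's English description precedes it below -/
import Mathlib

section
/- Let B be a Fell bundle over a discrete group G. Every element of the Fourier space A(B) lies in c₀(G, L(B, B_e)): if ξ, η ∈ ℓ²(B), then the coefficient family λ_{ξ,η}, with λ_{ξ,η,s}(b) = ⟨λ_s(b)ξ, η⟩ ∈ B_e, vanishes at infinity, i.e., for every ε > 0 the set {s ∈ G : ‖λ_{ξ,η,s}‖ ≥ ε} is finite. -/
section Aux
open scoped InnerProductSpace

lemma finCS {A : Type} [CStarAlgebra A] [PartialOrder A] [StarOrderedRing A]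
    {ι : Type} (a b : ι → A) (t : Finset ι) :
    ‖∑ r ∈ t, star (a r) * b r‖ ≤
      Real.sqrt ‖∑ r ∈ t, star (a r) * a r‖ * Real.sqrt ‖∑ r ∈ t, star (b r) * b r‖ := by
  classical
  let E := WithCStarModule A (∀ i : ↥t, A)
  let x : E := (WithCStarModule.equiv _ _).symm fun i => star (b i)
  let y : E := (WithCStarModule.equiv _ _).symm fun i => star (a i)
  have h := CStarModule.norm_inner_le (A := A) E (x := x) (y := y)
  have hinner : ⟪x, y⟫_A = ∑ r ∈ t, star (a r) * b r := by
    rw [WithCStarModule.pi_inner, ← Finset.sum_attach t (fun r => star (a r) * b r)]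
    refine Finset.sum_congr rfl fun r _ => ?_
    rw [WithCStarModule.inner_def]; exact congrArg _ (star_star _)
  have hx : ‖x‖ = Real.sqrt ‖∑ r ∈ t, star (b r) * b r‖ := by
    rw [WithCStarModule.pi_norm]
    congr 1
    rw [← Finset.sum_attach t (fun r => star (b r) * b r)]
    refine congrArg _ (Finset.sum_congr rfl fun r _ => ?_)
    rw [WithCStarModule.inner_def]; exact congrArg _ (star_star _)
  have hy : ‖y‖ = Real.sqrt ‖∑ r ∈ t, star (a r) * a r‖ := by
    rw [WithCStarModule.pi_norm]
    congr 1
    rw [← Finset.sum_attach t (fun r => star (a r) * a r)]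
    refine congrArg _ (Finset.sum_congr rfl fun r _ => ?_)
    rw [WithCStarModule.inner_def]; exact congrArg _ (star_star _)
  rw [hinner, hx, hy] at h
  exact h.trans_eq (mul_comm _ _)

lemma partial_norm_le {A : Type} [CStarAlgebra A] [PartialOrder A] [StarOrderedRing A]
    {ι : Type} (x : ι → A) (hx : Summable fun r => star (x r) * x r) (u : Finset ι) :
    ‖∑ r ∈ u, star (x r) * x r‖ ≤ ‖∑' r, star (x r) * x r‖ :=
  CStarAlgebra.norm_le_norm_of_nonneg_of_le
    (Finset.sum_nonneg fun r _ => star_mul_self_nonneg _)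
    (Summable.sum_le_tsum u (fun r _ => star_mul_self_nonneg _) hx)

lemma conj_norm_le {A : Type} [CStarAlgebra A] [PartialOrder A] [StarOrderedRing A]
    (b : A) (hb : ‖b‖ ≤ 1) {ι : Type} (x : ι → A) (t : Finset ι) :
    ‖∑ r ∈ t, star (b * x r) * (b * x r)‖ ≤ ‖∑ r ∈ t, star (x r) * x r‖ := by
  have key : ∀ r : ι, star (b * x r) * (b * x r) = star (x r) * (star b * b) * (x r) := by
    intro r
    rw [star_mul]
    noncomm_ring
  have h1 : ∑ r ∈ t, star (b * x r) * (b * x r) ≤ ‖star b * b‖ • ∑ r ∈ t, star (x r) * x r := by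
    rw [Finset.smul_sum]
    refine Finset.sum_le_sum fun r _ => ?_
    rw [key]
    exact CStarAlgebra.star_left_conjugate_le_norm_smul (IsSelfAdjoint.star_mul_self b)
  calc ‖∑ r ∈ t, star (b * x r) * (b * x r)‖
      ≤ ‖‖star b * b‖ • ∑ r ∈ t, star (x r) * x r‖ :=
        CStarAlgebra.norm_le_norm_of_nonneg_of_le
          (Finset.sum_nonneg fun r _ => star_mul_self_nonneg _) h1
    _ = ‖star b * b‖ * ‖∑ r ∈ t, star (x r) * x r‖ := by
        rw [norm_smul, Real.norm_of_nonneg (norm_nonneg _)]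
    _ ≤ 1 * ‖∑ r ∈ t, star (x r) * x r‖ := by
        have : ‖star b * b‖ ≤ 1 := by
          rw [CStarRing.norm_star_mul_self]
          exact mul_le_one₀ hb (norm_nonneg b) hb
        exact mul_le_mul_of_nonneg_right this (norm_nonneg _)
    _ = _ := one_mul _

/-- Main quantitative lemma. -/
lemma main_bound {G A : Type} [Group G] [CStarAlgebra A] [PartialOrder A] [StarOrderedRing A]
    (ξ η : G → A)
    (hξ2 : Summable fun r : G => star (ξ r) * ξ r)
    (hη2 : Summable fun r : G => star (η r) * η r)
    (ε : ℝ) (hε : 0 < ε) :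
    {s : G | ∃ b : A, ‖b‖ ≤ 1 ∧ ε ≤ ‖∑' r : G, star (b * ξ (s⁻¹ * r)) * η r‖}.Finite := by
  classical
  set Xξ : A := ∑' r, star (ξ r) * ξ r with hXξ
  set Xη : A := ∑' r, star (η r) * η r with hXη
  set M : ℝ := Real.sqrt ‖Xξ‖ + Real.sqrt ‖Xη‖ + 1 with hMdef
  have hM : 0 < M := by positivity
  set δ : ℝ := (ε / M) ^ 2 with hδdef
  have hδ : 0 < δ := by positivity
  have hball : Metric.closedBall (0 : A) δ ∈ nhds (0 : A) :=
    Metric.closedBall_mem_nhds 0 hδ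
  obtain ⟨Fξ, hFξ⟩ := hξ2.vanishing hball
  obtain ⟨Fη, hFη⟩ := hη2.vanishing hball
  set F : Finset G := Fξ ∪ Fη with hFdef
  have htailξ : ∀ t : Finset G, Disjoint t F → ‖∑ r ∈ t, star (ξ r) * ξ r‖ ≤ δ := by
    intro t ht
    have := hFξ t (ht.mono_right Finset.subset_union_left)
    rwa [Metric.mem_closedBall, dist_zero_right] at this
  have htailη : ∀ t : Finset G, Disjoint t F → ‖∑ r ∈ t, star (η r) * η r‖ ≤ δ := by
    intro t ht
    have := hFη t (ht.mono_right Finset.subset_union_right)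
    rwa [Metric.mem_closedBall, dist_zero_right] at this
  set F2 : Finset G := F.biUnion (fun r => F.image (fun r' => r * r'⁻¹)) with hF2def
  refine Set.Finite.subset F2.finite_toSet ?_
  intro s hs
  obtain ⟨b, hb1, hbε⟩ := hs
  by_contra hsF2
  -- key: r ∈ F → s⁻¹ * r ∉ F
  have hkey : ∀ r ∈ F, s⁻¹ * r ∉ F := by
    intro r hr hr'
    refine hsF2 (Finset.mem_coe.mpr ?_)
    exact Finset.mem_biUnion.mpr ⟨r, hr, Finset.mem_image.mpr ⟨s⁻¹ * r, hr', by group⟩⟩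
  set f : G → A := fun r => star (b * ξ (s⁻¹ * r)) * η r with hfdef
  have hsqrtδ : Real.sqrt δ = ε / M := Real.sqrt_sq (by positivity)
  -- bound the partial sums
  have hpartial : ∀ t : Finset G, ‖∑ r ∈ t, f r‖ ≤ ε / M * (Real.sqrt ‖Xη‖ + Real.sqrt ‖Xξ‖) := by
    intro t
    have hsplit : ∑ r ∈ t ∩ F, f r + ∑ r ∈ t \ F, f r = ∑ r ∈ t, f r :=
      Finset.sum_inter_add_sum_sdiff t F f
    have hineq : ∀ u : Finset G, (∀ r ∈ u, s⁻¹ * r ∉ F) →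
        ‖∑ r ∈ u, star (ξ (s⁻¹ * r)) * ξ (s⁻¹ * r)‖ ≤ δ := by
      intro u hu
      have hinj : Set.InjOn (fun r => s⁻¹ * r) u := fun x _ y _ h => by
        simpa using mul_left_cancel h
      rw [← Finset.sum_image (f := fun r => star (ξ r) * ξ r) (fun x hx y hy h => hinj hx hy h)]
      refine htailξ _ (Finset.disjoint_left.mpr ?_)
      intro x hx
      obtain ⟨r, hr, rfl⟩ := Finset.mem_image.mp hx
      exact hu r hr
    -- part A : t ∩ F
    have hA : ‖∑ r ∈ t ∩ F, f r‖ ≤ ε / M * Real.sqrt ‖Xη‖ := by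
      calc ‖∑ r ∈ t ∩ F, f r‖
          ≤ Real.sqrt ‖∑ r ∈ t ∩ F, star (b * ξ (s⁻¹ * r)) * (b * ξ (s⁻¹ * r))‖ *
            Real.sqrt ‖∑ r ∈ t ∩ F, star (η r) * η r‖ :=
            finCS (fun r => b * ξ (s⁻¹ * r)) η (t ∩ F)
        _ ≤ Real.sqrt δ * Real.sqrt ‖Xη‖ := by
            refine mul_le_mul ?_ ?_ (Real.sqrt_nonneg _) (Real.sqrt_nonneg _)
            · refine Real.sqrt_le_sqrt ?_ |>.trans (le_of_eq rfl)
              refine (conj_norm_le b hb1 (fun r => ξ (s⁻¹ * r)) (t ∩ F)).trans ?_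
              exact hineq (t ∩ F) fun r hr => hkey r (Finset.mem_of_mem_inter_right hr)
            · exact Real.sqrt_le_sqrt (partial_norm_le η hη2 (t ∩ F))
        _ = ε / M * Real.sqrt ‖Xη‖ := by rw [hsqrtδ]
    -- part B : t \ F
    have hB : ‖∑ r ∈ t \ F, f r‖ ≤ Real.sqrt ‖Xξ‖ * (ε / M) := by
      calc ‖∑ r ∈ t \ F, f r‖
          ≤ Real.sqrt ‖∑ r ∈ t \ F, star (b * ξ (s⁻¹ * r)) * (b * ξ (s⁻¹ * r))‖ *
            Real.sqrt ‖∑ r ∈ t \ F, star (η r) * η r‖ :=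
            finCS (fun r => b * ξ (s⁻¹ * r)) η (t \ F)
        _ ≤ Real.sqrt ‖Xξ‖ * Real.sqrt δ := by
            refine mul_le_mul ?_ ?_ (Real.sqrt_nonneg _) (Real.sqrt_nonneg _)
            · refine Real.sqrt_le_sqrt ?_
              refine (conj_norm_le b hb1 (fun r => ξ (s⁻¹ * r)) (t \ F)).trans ?_
              have hinj : ∀ x ∈ t \ F, ∀ y ∈ t \ F,
                  (fun r => s⁻¹ * r) x = (fun r => s⁻¹ * r) y → x = y := fun x _ y _ h => by
                simpa using mul_left_cancel h
              rw [← Finset.sum_image (f := fun r => star (ξ r) * ξ r) hinj]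
              exact partial_norm_le ξ hξ2 _
            · exact Real.sqrt_le_sqrt (htailη (t \ F) (Finset.sdiff_disjoint))
        _ = Real.sqrt ‖Xξ‖ * (ε / M) := by rw [hsqrtδ]
    calc ‖∑ r ∈ t, f r‖ = ‖∑ r ∈ t ∩ F, f r + ∑ r ∈ t \ F, f r‖ := by rw [hsplit]
      _ ≤ ‖∑ r ∈ t ∩ F, f r‖ + ‖∑ r ∈ t \ F, f r‖ := norm_add_le _ _
      _ ≤ ε / M * Real.sqrt ‖Xη‖ + Real.sqrt ‖Xξ‖ * (ε / M) := add_le_add hA hB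
      _ = ε / M * (Real.sqrt ‖Xη‖ + Real.sqrt ‖Xξ‖) := by ring
  -- bound the tsum
  have htsum : ‖∑' r, f r‖ ≤ ε / M * (Real.sqrt ‖Xη‖ + Real.sqrt ‖Xξ‖) := by
    by_cases hsum : Summable f
    · have htend : Filter.Tendsto (fun t : Finset G => ‖∑ r ∈ t, f r‖)
          Filter.atTop (nhds ‖∑' r, f r‖) :=
        (continuous_norm.tendsto _).comp hsum.hasSum
      exact le_of_tendsto' htend hpartial
    · rw [tsum_eq_zero_of_not_summable hsum, norm_zero]
      positivity
  have hlt : ε / M * (Real.sqrt ‖Xη‖ + Real.sqrt ‖Xξ‖) < ε := by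
    have h1 : Real.sqrt ‖Xη‖ + Real.sqrt ‖Xξ‖ < M := by
      rw [hMdef]; linarith [Real.sqrt_nonneg ‖Xξ‖, Real.sqrt_nonneg ‖Xη‖]
    have h2 : 0 < ε / M := by positivity
    calc ε / M * (Real.sqrt ‖Xη‖ + Real.sqrt ‖Xξ‖) < ε / M * M := by
          exact mul_lt_mul_of_pos_left h1 h2
      _ = ε := div_mul_cancel₀ ε hM.ne'
  exact absurd (hbε.trans htsum) (not_le.mpr hlt)

end Aux


/-- A Fell bundle over a discrete group `G`: a family of closed subspaces of a
C*-algebra `A` satisfying `B_s B_t ⊆ B_{st}` and `B_s* = B_{s⁻¹}`. -/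
structure FellBundle (G : Type) [Group G] (A : Type) [NormedRing A] [StarRing A]
    [NormedAlgebra ℂ A] where
  fiber : G → Submodule ℂ A
  isClosed : ∀ s, IsClosed (fiber s : Set A)
  mul_mem : ∀ {s t : G} {a b : A}, a ∈ fiber s → b ∈ fiber t → a * b ∈ fiber (s * t)
  star_mem : ∀ {s : G} {a : A}, a ∈ fiber s → star a ∈ fiber s⁻¹

/-- A representation of a Fell bundle on a Hilbert space: fiberwise linear maps
satisfying `π_s(b)π_t(c) = π_{st}(bc)` and `π_s(b)* = π_{s⁻¹}(b*)`. -/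
structure FellRep {G A : Type} [Group G] [NormedRing A] [StarRing A] [NormedAlgebra ℂ A]
    (B : FellBundle G A) where
  H : Type
  [instN : NormedAddCommGroup H]
  [instI : InnerProductSpace ℂ H]
  [instC : CompleteSpace H]
  map : ∀ s : G, (B.fiber s) →ₗ[ℂ] (H →L[ℂ] H)
  map_mul : ∀ (s t : G) (b : B.fiber s) (c : B.fiber t),
    map s b * map t c = map (s * t) ⟨(b : A) * (c : A), B.mul_mem b.2 c.2⟩
  map_star : ∀ (s : G) (b : B.fiber s),
    ContinuousLinearMap.adjoint (map s b) = map s⁻¹ ⟨star (b : A), B.star_mem b.2⟩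

attribute [instance] FellRep.instN FellRep.instI FellRep.instC

/-- The coefficient of the regular representation:
`λ_{ξ,η,s}(b) = ⟨λ_s(b)ξ, η⟩ = Σ_r (b ξ(s⁻¹r))* η(r) ∈ B_e`. -/
noncomputable def regCoeff {G A : Type} [Group G] [NormedRing A] [StarRing A]
    [NormedAlgebra ℂ A] (ξ η : G → A) (s : G) (b : A) : A :=
  ∑' r : G, star (b * ξ (s⁻¹ * r)) * η r

/-- every element of the Fourier space `A(B)` lies in
`c₀(G, L(B, B_e))`: for `ξ, η ∈ ℓ²(B)`, the coefficient family `λ_{ξ,η}` of the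
regular representation vanishes at infinity, i.e. for every `ε > 0` the set of
`s ∈ G` where `‖λ_{ξ,η,s}‖ ≥ ε` (witnessed on the unit ball of the fiber `B_s`)
is finite. -/
theorem fourier_space_vanishes_at_infinity
    {G A : Type} [Group G]
    [NormedRing A] [StarRing A] [CStarRing A] [NormedAlgebra ℂ A] [StarModule ℂ A]
    [CompleteSpace A]
    (B : FellBundle G A) (ξ η : G → A)
    (hξm : ∀ r, ξ r ∈ B.fiber r) (hηm : ∀ r, η r ∈ B.fiber r)
    (hξ2 : Summable fun r : G => star (ξ r) * ξ r)
    (hη2 : Summable fun r : G => star (η r) * η r)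
    (ε : ℝ) (hε : 0 < ε) :
    {s : G | ∃ b ∈ B.fiber s, ‖b‖ ≤ 1 ∧ ε ≤ ‖regCoeff ξ η s b‖}.Finite := by
  letI : CStarAlgebra A :=
    { ‹NormedRing A›, ‹StarRing A›, ‹CStarRing A›, ‹NormedAlgebra ℂ A›,
      ‹StarModule ℂ A›, ‹CompleteSpace A› with }
  letI := CStarAlgebra.spectralOrder A
  haveI := CStarAlgebra.spectralOrderedRing A
  refine (main_bound ξ η hξ2 hη2 ε hε).subset ?_
  rintro s ⟨b, -, hb1, hbε⟩
  exact ⟨b, hb1, hbε⟩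
end

section
/- For the trivial Fell bundle B = G × ℂ over a discrete group G, the map T sending the coefficient family λ_{ξ,η} ∈ A(B) to the function s ↦ ⟨λ^G_s θξ, θη⟩_{ℓ²(G)} ∈ A(G) (where θ(s,z) = z identifies ℓ²(B) with ℓ²(G)) is an isometric algebra isomorphism from A(B) onto the Fourier algebra A(G). -/
/-- A unitary representation of a discrete group on a Hilbert space. -/
structure URep (G : Type) [Group G] where
  H : Type
  [instN : NormedAddCommGroup H]
  [instI : InnerProductSpace ℂ H]
  [instC : CompleteSpace H]
  U : G →* (H →L[ℂ] H)
  adj : ∀ s : G, ContinuousLinearMap.adjoint (U s) = U s⁻¹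

attribute [instance] URep.instN URep.instI URep.instC

/-- The norm `‖f‖_*` of a finitely supported function, as the supremum over all
unitary representations (for the trivial bundle this is both the bundle norm and the
full group C*-norm). -/
noncomputable def normStarG {G : Type} [Group G] (f : G →₀ ℂ) : ℝ :=
  sSup {x : ℝ | ∃ ρ : URep G, x = ‖∑ s ∈ f.support, f s • ρ.U s‖}

/-- The Fourier algebra `A(G)`: coefficient functions `s ↦ ⟨λ_s ξ, η⟩` of the left
regular representation of `G` on `ℓ²(G)`. -/
def AGset (G : Type) [Group G] : Set (G → ℂ) :=
  {u | ∃ ξ η : G → ℂ, Memℓp ξ 2 ∧ Memℓp η 2 ∧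
    ∀ s : G, u s = ∑' r : G, (starRingEnd ℂ) (ξ (s⁻¹ * r)) * η r}

/-- The Fourier space `A(B)` of the trivial Fell bundle `B = G × ℂ`: coefficient
families `λ_{ξ,η,s} : B_s → B_e`, `(s,z) ↦ ⟨λ_s(s,z)ξ, η⟩`, of the regular
representation (fibers `{s} × ℂ` identified with `ℂ`). -/
def ABtrivSet (G : Type) [Group G] : Set (G → ℂ → ℂ) :=
  {u | ∃ ξ η : G → ℂ, Memℓp ξ 2 ∧ Memℓp η 2 ∧
    ∀ (s : G) (z : ℂ),
      u s z = (starRingEnd ℂ) z * ∑' r : G, (starRingEnd ℂ) (ξ (s⁻¹ * r)) * η r}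

/-- The product on `A(B)` induced by the comultiplication
`Δ_{s,t}(st,z) = (s,z) ⊗ (t,1)` (with the chosen elements `b₀^s = (s,1)`). -/
def ABtrivMul {G : Type} [Group G] (u v : G → ℂ → ℂ) : G → ℂ → ℂ :=
  fun s z => u s z * v s 1

/-- The `A(B)` norm: `‖u‖ = sup {|Σ_s u_s(f_s)| : ‖f‖_* ≤ 1}`. -/
noncomputable def ABtrivNorm {G : Type} [Group G] (u : G → ℂ → ℂ) : ℝ :=
  sSup {x : ℝ | ∃ f : G →₀ ℂ, normStarG f ≤ 1 ∧
    x = ‖∑ s ∈ f.support, u s (f s)‖}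

/-- The `A(G)` norm, defined analogously. -/
noncomputable def AGnorm {G : Type} [Group G] (v : G → ℂ) : ℝ :=
  sSup {x : ℝ | ∃ f : G →₀ ℂ, normStarG f ≤ 1 ∧
    x = ‖∑ s ∈ f.support, v s * f s‖}

open scoped ComplexConjugate

section ConjSpace

variable (H : Type) [NormedAddCommGroup H] [InnerProductSpace ℂ H]

def ConjSp : Type := H

instance : NormedAddCommGroup (ConjSp H) := ‹NormedAddCommGroup H›

noncomputable instance : Module ℂ (ConjSp H) := Module.compHom H (starRingEnd ℂ)

variable {H}

/-- identity map, as equivalence between `H` and `ConjSp H`. -/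
def toConj : H ≃ ConjSp H := Equiv.refl H

lemma conj_smul_def (z : ℂ) (x : ConjSp H) :
    z • x = toConj (conj z • toConj.symm x) := rfl

lemma conj_norm_def (x : ConjSp H) : ‖x‖ = ‖toConj.symm x‖ := rfl

noncomputable instance : NormedSpace ℂ (ConjSp H) where
  norm_smul_le z x := by
    rw [conj_smul_def, conj_norm_def]
    show ‖conj z • toConj.symm x‖ ≤ _
    rw [norm_smul]
    simp [conj_norm_def]

noncomputable instance : InnerProductSpace ℂ (ConjSp H) where
  inner x y := inner (𝕜 := ℂ) (toConj.symm y) (toConj.symm x)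
  norm_sq_eq_re_inner x := by
    show ‖toConj.symm x‖ ^ 2 = _
    exact InnerProductSpace.norm_sq_eq_re_inner (toConj.symm x)
  conj_inner_symm x y := inner_conj_symm _ _
  add_left x y z := by
    show inner (𝕜 := ℂ) _ (toConj.symm x + toConj.symm y) = _
    rw [inner_add_right]
  smul_left x y r := by
    show inner (𝕜 := ℂ) (toConj.symm y) (conj r • toConj.symm x) = _
    rw [inner_smul_right]

instance [CompleteSpace H] : CompleteSpace (ConjSp H) := ‹CompleteSpace H›

/-- A continuous linear map, transported to the conjugate space. -/
noncomputable def conjCLM (A : H →L[ℂ] H) : ConjSp H →L[ℂ] ConjSp H where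
  toFun x := toConj (A (toConj.symm x))
  map_add' x y := A.map_add _ _
  map_smul' z x := A.map_smul (conj z) (toConj.symm x)
  cont := A.cont

@[simp] lemma conjCLM_apply (A : H →L[ℂ] H) (x : ConjSp H) :
    conjCLM A x = toConj (A (toConj.symm x)) := rfl

lemma conjCLM_norm (A : H →L[ℂ] H) : ‖conjCLM A‖ = ‖A‖ := by
  apply le_antisymm
  · exact ContinuousLinearMap.opNorm_le_bound _ (norm_nonneg A) fun x => A.le_opNorm _
  · exact ContinuousLinearMap.opNorm_le_bound _ (norm_nonneg _) fun x =>
      (conjCLM A).le_opNorm (toConj x)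

variable [CompleteSpace H]

/-- The conjugate of a unitary representation. -/
noncomputable def URep.conj {G : Type} [Group G] (ρ : URep G) : URep G where
  H := ConjSp ρ.H
  U := { toFun := fun s => conjCLM (ρ.U s)
         map_one' := by ext x; simp
         map_mul' := fun s t => by ext x; simp }
  adj := by
    intro s
    symm
    rw [ContinuousLinearMap.eq_adjoint_iff]
    intro x y
    show inner (𝕜 := ℂ) (toConj.symm y) (ρ.U s⁻¹ (toConj.symm x)) = _
    rw [← ρ.adj, ContinuousLinearMap.adjoint_inner_right]
    rfl

lemma URep.conj_norm_sum {G : Type} [Group G] (ρ : URep G) (t : Finset G) (f : G → ℂ) :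
    ‖∑ s ∈ t, conj (f s) • ρ.conj.U s‖ = ‖∑ s ∈ t, f s • ρ.U s‖ := by
  have key : ∀ x : ConjSp ρ.H,
      (∑ s ∈ t, conj (f s) • ρ.conj.U s) x
        = toConj ((∑ s ∈ t, f s • ρ.U s) (toConj.symm x)) := by
    intro x
    rw [ContinuousLinearMap.sum_apply]; erw [ContinuousLinearMap.sum_apply]
    show _ = (∑ s ∈ t, (f s • ρ.U s) (toConj.symm x) : ρ.H)
    refine Finset.sum_congr rfl fun s _ => ?_
    show ((starRingEnd ℂ) ((starRingEnd ℂ) (f s))) • (ρ.U s (toConj.symm x)) = _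
    simp
  apply le_antisymm
  · refine ContinuousLinearMap.opNorm_le_bound _ (norm_nonneg _) fun x => ?_
    rw [key x]
    exact (∑ s ∈ t, f s • ρ.U s).le_opNorm (toConj.symm x)
  · refine ContinuousLinearMap.opNorm_le_bound _ (norm_nonneg _) fun x => ?_
    have h := key (toConj x)
    simp only [Equiv.symm_apply_apply] at h
    calc ‖(∑ s ∈ t, f s • ρ.U s) x‖
        = ‖toConj ((∑ s ∈ t, f s • ρ.U s) x)‖ := rfl
      _ = ‖(∑ s ∈ t, conj (f s) • ρ.conj.U s) (toConj x)‖ := (congrArg norm h).symm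
      _ ≤ _ := (∑ s ∈ t, conj (f s) • ρ.conj.U s).le_opNorm (toConj x)

end ConjSpace

section Main

variable {G : Type} [Group G]

lemma normStarG_conj (f : G →₀ ℂ) :
    normStarG (f.mapRange (starRingEnd ℂ) (map_zero _)) = normStarG f := by
  set fbar := f.mapRange (starRingEnd ℂ) (map_zero _) with hfbar
  have hsupp : fbar.support = f.support :=
    Finsupp.support_mapRange_of_injective (map_zero _) f (starRingEnd ℂ).injective
  have happ : ∀ s, fbar s = conj (f s) := fun s => Finsupp.mapRange_apply
  unfold normStarG
  congr 1
  ext x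
  constructor
  · rintro ⟨ρ, rfl⟩
    refine ⟨ρ.conj, ?_⟩
    have := URep.conj_norm_sum ρ fbar.support (fbar : G → ℂ)
    rw [hsupp] at this ⊢
    rw [← this]
    congr 1
    exact Finset.sum_congr rfl fun s _ => by rw [happ s]; simp
  · rintro ⟨ρ, rfl⟩
    refine ⟨ρ.conj, ?_⟩
    rw [hsupp, ← URep.conj_norm_sum ρ f.support (f : G → ℂ)]
    exact congrArg norm (Finset.sum_congr rfl fun s _ => by rw [happ s])

lemma AB_pointwise {u : G → ℂ → ℂ} (hu : u ∈ ABtrivSet G) :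
    ∀ s z, u s z = conj z * u s 1 := by
  obtain ⟨ξ, η, -, -, h⟩ := hu
  intro s z
  have h1 := h s 1
  simp only [map_one, one_mul] at h1
  rw [h s z, h1]

lemma AG_AB_norm {u : G → ℂ → ℂ} (hu : u ∈ ABtrivSet G) :
    AGnorm (fun s => u s 1) = ABtrivNorm u := by
  have huz := AB_pointwise hu
  unfold AGnorm ABtrivNorm
  congr 1
  ext x
  constructor
  · rintro ⟨f, hf, rfl⟩
    set fbar := f.mapRange (starRingEnd ℂ) (map_zero _) with hfbar
    have hsupp : fbar.support = f.support :=
      Finsupp.support_mapRange_of_injective (map_zero _) f (starRingEnd ℂ).injective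
    refine ⟨fbar, by rw [hfbar, normStarG_conj f]; exact hf, ?_⟩
    rw [hsupp]
    refine congrArg norm (Finset.sum_congr rfl fun s _ => ?_)
    rw [huz s (fbar s), Finsupp.mapRange_apply]
    simp [mul_comm]
  · rintro ⟨f, hf, rfl⟩
    set fbar := f.mapRange (starRingEnd ℂ) (map_zero _) with hfbar
    have hsupp : fbar.support = f.support :=
      Finsupp.support_mapRange_of_injective (map_zero _) f (starRingEnd ℂ).injective
    refine ⟨fbar, by rw [hfbar, normStarG_conj f]; exact hf, ?_⟩
    rw [hsupp]
    refine congrArg norm (Finset.sum_congr rfl fun s _ => ?_)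
    rw [huz s (f s), Finsupp.mapRange_apply]
    ring

end Main


/-- for the trivial Fell bundle `B = G × ℂ` over a discrete group, the
map `T : λ_{ξ,η} ↦ (s ↦ ⟨λ^G_s θξ, θη⟩)` (evaluation of the coefficient family at the
unit of each fiber, via the identification `θ : ℓ²(B) ≅ ℓ²(G)`) is an isometric
algebra isomorphism from `A(B)` onto the Fourier algebra `A(G)`. -/
theorem trivial_bundle_fourier_space_iso_fourier_algebra (G : Type) [Group G] :
    ∃ T : (G → ℂ → ℂ) → (G → ℂ),
      (∀ u ∈ ABtrivSet G, T u = fun s => u s 1) ∧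
      Set.BijOn T (ABtrivSet G) (AGset G) ∧
      (∀ u ∈ ABtrivSet G, ∀ v ∈ ABtrivSet G,
        T (ABtrivMul u v) = fun s => T u s * T v s) ∧
      (∀ u ∈ ABtrivSet G, AGnorm (T u) = ABtrivNorm u) := by
  refine ⟨fun u s => u s 1, fun u _ => rfl, ⟨?_, ?_, ?_⟩, fun u _ v _ => rfl,
    fun u hu => AG_AB_norm hu⟩
  · rintro u ⟨ξ, η, h1, h2, h⟩
    refine ⟨ξ, η, h1, h2, fun s => ?_⟩
    simpa using h s 1
  · intro u hu v hv h
    funext s z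
    rw [AB_pointwise hu s z, AB_pointwise hv s z]
    exact congrArg _ (congrFun h s)
  · rintro v ⟨ξ, η, h1, h2, h⟩
    refine ⟨fun s z => conj z * v s, ⟨ξ, η, h1, h2, fun s z => by rw [← h s]⟩, ?_⟩
    funext s
    simp
end
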